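/- Let Φ be an irreducible root system with highest root β, and let ν be a dominant cocharacter (i.e. ⟨ν, α⟩ ≥ 0 for all positive roots α) such that ⟨ν, α⟩ ∈ {0, 1, 2} for all positive roots α and such that there is exactly one positive root α with ⟨ν, α⟩ = 2. Then ⟨ν, β⟩ = 2 and ν = β∨. -/

import Mathlib

open RealInnerProductSpace

/-- If `ν` is a dominant cocharacter of an irreducible root system `Φ` taking only the
values `0, 1, 2` on positive roots, with exactly one positive root of value `2`, then
`ν(β) = 2` for the highest root `β` and `ν = β∨` (viewed as the linear functional
`x ↦ 2(β,x)/(β,β)`). -/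
theorem stmt_3
    {V : Type*} [NormedAddCommGroup V] [InnerProductSpace ℝ V] [FiniteDimensional ℝ V]
    (Φ : Set V)
    (hfin : Φ.Finite)
    (h0 : (0 : V) ∉ Φ)
    (hspan : Submodule.span ℝ Φ = ⊤)
    (hcrys : ∀ α ∈ Φ, ∀ β ∈ Φ, ∃ n : ℤ, 2 * ⟪α, β⟫ / ⟪β, β⟫ = (n : ℝ))
    (hrefl : ∀ α ∈ Φ, ∀ β ∈ Φ, β - (2 * ⟪β, α⟫ / ⟪α, α⟫) • α ∈ Φ)
    (hred : ∀ α ∈ Φ, ∀ t : ℝ, t • α ∈ Φ → t = 1 ∨ t = -1)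
    (hirr : ∀ Φ₁ Φ₂ : Set V, Φ = Φ₁ ∪ Φ₂ →
      (∀ α ∈ Φ₁, ∀ β ∈ Φ₂, ⟪α, β⟫ = 0) → Φ₁ = ∅ ∨ Φ₂ = ∅)
    (Δ : Set V) (hΔ : Δ ⊆ Φ)
    (hposneg : ∀ α ∈ Φ, α ∈ AddSubmonoid.closure Δ ∨ -α ∈ AddSubmonoid.closure Δ)
    {β : V} (hβ : β ∈ Φ) (hβpos : β ∈ AddSubmonoid.closure Δ)
    (hhighest : ∀ α ∈ Φ, β - α ∈ AddSubmonoid.closure Δ)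
    (ν : V →ₗ[ℝ] ℝ)
    (hint : ∀ α ∈ Φ, ∃ n : ℤ, ν α = (n : ℝ))
    (hdom : ∀ α ∈ Φ, α ∈ AddSubmonoid.closure Δ → 0 ≤ ν α)
    (hval : ∀ α ∈ Φ, α ∈ AddSubmonoid.closure Δ →
      ν α = 0 ∨ ν α = 1 ∨ ν α = 2)
    (huniq : ∃! α : V, α ∈ Φ ∧ α ∈ AddSubmonoid.closure Δ ∧ ν α = 2) :
    ν β = 2 ∧ ∀ x : V, ν x = 2 * ⟪β, x⟫ / ⟪β, β⟫ := by
  have hne : ∀ α ∈ Φ, α ≠ (0:V) := fun α hα h => h0 (h ▸ hα)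
  have hip : ∀ α ∈ Φ, (0:ℝ) < ⟪α, α⟫ := fun α hα =>
    lt_of_le_of_ne real_inner_self_nonneg (Ne.symm (inner_self_ne_zero.2 (hne α hα)))
  have hneg : ∀ α ∈ Φ, -α ∈ Φ := by
    intro α hα
    have h2 : 2 * ⟪α, α⟫ / ⟪α, α⟫ = (2:ℝ) := by
      rw [mul_div_assoc, div_self (ne_of_gt (hip α hα)), mul_one]
    have := hrefl α hα α hα
    rw [h2] at this
    have heq : α - (2:ℝ) • α = -α := by module
    rwa [heq] at this
  -- ν is nonnegative on the positive cone
  have hν0 : ∀ x ∈ AddSubmonoid.closure Δ, 0 ≤ ν x := by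
    intro x hx
    induction hx using AddSubmonoid.closure_induction with
    | mem y hy => exact hdom y (hΔ hy) (AddSubmonoid.subset_closure hy)
    | zero => simp
    | add a b _ _ ha hb => rw [map_add]; linarith
  obtain ⟨α₀, ⟨hα₀Φ, hα₀pos, hα₀2⟩, hun⟩ := huniq
  -- ν β = 2
  have hνβ : ν β = 2 := by
    have h1 : 0 ≤ ν (β - α₀) := hν0 _ (hhighest α₀ hα₀Φ)
    rw [map_sub, hα₀2] at h1
    rcases hval β hβ hβpos with h | h | h <;> linarith
  have hu2 : ∀ γ ∈ Φ, γ ∈ AddSubmonoid.closure Δ → ν γ = 2 → γ = β := by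
    intro γ hγ hγp hγ2
    rw [hun γ ⟨hγ, hγp, hγ2⟩, hun β ⟨hβ, hβpos, hνβ⟩]
  -- positive roots pair nonnegatively with β
  have hNN : ∀ a ∈ Φ, a ∈ AddSubmonoid.closure Δ → 0 ≤ ⟪a, β⟫ := by
    intro a ha hapos
    by_contra hlt
    push_neg at hlt
    obtain ⟨n, hn⟩ := hcrys β hβ a ha
    have hβa : ⟪β, a⟫ < 0 := by rwa [real_inner_comm]
    have hnneg : (n:ℝ) < 0 := by
      rw [← hn]
      exact div_neg_of_neg_of_pos (by linarith) (hip a ha)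
    have hn1 : (n:ℝ) ≤ -1 := by
      have hz : n < 0 := by exact_mod_cast hnneg
      have : n ≤ -1 := by omega
      exact_mod_cast this
    have hη : β - (n:ℝ) • a ∈ Φ := by
      have := hrefl a ha β hβ; rwa [hn] at this
    have hνη : ν (β - (n:ℝ) • a) = 2 - n * ν a := by
      rw [map_sub, map_smul, smul_eq_mul, hνβ]
    have hνa : 0 ≤ ν a := hdom a ha hapos
    have h2le : (2:ℝ) ≤ ν (β - (n:ℝ) • a) := by
      rw [hνη]; nlinarith
    rcases hposneg _ hη with hp | hp
    · rcases hval _ hη hp with h | h | h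
      · linarith
      · linarith
      · have := hu2 _ hη hp h
        have : (n:ℝ) • a = 0 := by
          have h' : β - (n:ℝ) • a = β := this
          have := sub_eq_self.1 h'
          exact this
        rcases smul_eq_zero.1 this with h' | h'
        · exact absurd h' (by exact_mod_cast (by linarith : (n:ℝ) ≠ 0))
        · exact hne a ha h'
    · have := hν0 _ hp
      rw [map_neg] at this
      linarith
  -- positive roots with positive pairing with β, other than β, have Cartan number 1 and ν-value 1
  have hPos3a : ∀ a ∈ Φ, a ∈ AddSubmonoid.closure Δ → a ≠ β → 0 < ⟪a, β⟫ →
      2 * ⟪a, β⟫ / ⟪β, β⟫ = 1 := by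
    intro a ha hapos hane hgt
    obtain ⟨n, hn⟩ := hcrys a ha β hβ
    have hβip := hip β hβ
    have hnpos : (0:ℝ) < n := by
      rw [← hn]; positivity
    have hn1 : (1:ℤ) ≤ n := by exact_mod_cast hnpos
    rw [hn]
    by_contra hne1
    have hn2 : (2:ℝ) ≤ (n:ℝ) := by
      have : (1:ℤ) < n := lt_of_le_of_ne hn1 (by intro h; exact hne1 (by rw [← h]; norm_num))
      exact_mod_cast this
    have haβ : ⟪a, β⟫ = (n:ℝ) * ⟪β, β⟫ / 2 := by
      field_simp at hn ⊢; linarith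
    have hγ : a - (n:ℝ) • β ∈ Φ := by
      have := hrefl β hβ a ha; rwa [hn] at this
    have hγβ : ⟪a - (n:ℝ) • β, β⟫ < 0 := by
      rw [inner_sub_left, real_inner_smul_left, haβ]
      nlinarith
    rcases hposneg _ hγ with hp | hp
    · exact absurd (hNN _ hγ hp) (not_le.2 hγβ)
    · have hmγ : -(a - (n:ℝ) • β) ∈ Φ := hneg _ hγ
      have hνmγ : ν (-(a - (n:ℝ) • β)) = (n:ℝ) * 2 - ν a := by
        rw [map_neg, map_sub, map_smul, smul_eq_mul, hνβ]; ring
      have hva : ν a ≤ 2 := by rcases hval a ha hapos with h | h | h <;> linarith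
      have : ν a = 2 := by
        rcases hval _ hmγ hp with h | h | h <;> rw [hνmγ] at h <;> nlinarith
      exact hane (hu2 a ha hapos this)
  have hPos3b : ∀ a ∈ Φ, a ∈ AddSubmonoid.closure Δ → a ≠ β → 0 < ⟪a, β⟫ →
      ν a = 1 := by
    intro a ha hapos hane hgt
    have hνa2 : ν a ≠ 2 := fun h => hane (hu2 a ha hapos h)
    rcases hval a ha hapos with h | h | h
    · exfalso
      obtain ⟨m, hm⟩ := hcrys β hβ a ha
      have hmpos : (0:ℝ) < m := by
        rw [← hm]
        have h1 : 0 < ⟪β, a⟫ := by rwa [real_inner_comm]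
        exact div_pos (by linarith) (hip a ha)
      have hγ : β - (m:ℝ) • a ∈ Φ := by
        have := hrefl a ha β hβ; rwa [hm] at this
      have hνγ : ν (β - (m:ℝ) • a) = 2 := by
        rw [map_sub, map_smul, smul_eq_mul, hνβ, h]; ring
      rcases hposneg _ hγ with hp | hp
      · have heq := hu2 _ hγ hp hνγ
        have hz : (m:ℝ) • a = 0 := sub_eq_self.1 heq
        rcases smul_eq_zero.1 hz with h' | h'
        · exact absurd h' (ne_of_gt hmpos)
        · exact hne a ha h'
      · have := hν0 _ hp
        rw [map_neg, hνγ] at this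
        linarith
    · exact h
    · exact absurd h hνa2
  -- roots orthogonal to β that pair with some root non-orthogonal to β have ν = 0
  have hOZ : ∀ d ∈ Φ, ⟪d, β⟫ = 0 → ∀ e ∈ Φ, ⟪e, β⟫ ≠ 0 → ⟪d, e⟫ ≠ 0 → ν d = 0 := by
    intro d hd hdβ e he heβ hde
    -- normalize e to be positive
    obtain ⟨e', he', he'p, he'β, hde'⟩ :
        ∃ e', e' ∈ Φ ∧ e' ∈ AddSubmonoid.closure Δ ∧ 0 < ⟪e', β⟫ ∧ ⟪d, e'⟫ ≠ 0 := by
      rcases hposneg e he with hp | hp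
      · exact ⟨e, he, hp, lt_of_le_of_ne (hNN e he hp) (Ne.symm heβ), hde⟩
      · refine ⟨-e, hneg e he, hp, ?_, ?_⟩
        · have h1 := hNN (-e) (hneg e he) hp
          rw [inner_neg_left] at h1
          rw [inner_neg_left]
          rcases lt_or_gt_of_ne heβ with h | h
          · linarith
          · linarith
        · rw [inner_neg_right]
          simpa using hde
    -- normalize d so that ⟪e', d'⟫ < 0
    obtain ⟨d', hd'd, hd', hd'β, hed'⟩ :
        ∃ d', (d' = d ∨ d' = -d) ∧ d' ∈ Φ ∧ ⟪d', β⟫ = 0 ∧ ⟪e', d'⟫ < 0 := by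
      have hed : ⟪e', d⟫ ≠ 0 := by rw [real_inner_comm]; exact hde'
      rcases lt_or_gt_of_ne hed with h | h
      · exact ⟨d, Or.inl rfl, hd, hdβ, h⟩
      · refine ⟨-d, Or.inr rfl, hneg d hd, ?_, ?_⟩
        · rw [inner_neg_left, hdβ]; ring
        · rw [inner_neg_right]; linarith
    have he'ne : e' ≠ β := by
      intro h
      rw [h] at hed'
      rw [real_inner_comm] at hd'β
      linarith
    have hνe' : ν e' = 1 := hPos3b e' he' he'p he'ne he'β
    obtain ⟨m, hm⟩ := hcrys e' he' d' hd'
    have hmneg : (m:ℝ) < 0 := by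
      rw [← hm]
      exact div_neg_of_neg_of_pos (by linarith) (hip d' hd')
    have hη : e' - (m:ℝ) • d' ∈ Φ := by
      have := hrefl d' hd' e' he'; rwa [hm] at this
    have hηβ : 0 < ⟪e' - (m:ℝ) • d', β⟫ := by
      rw [inner_sub_left, real_inner_smul_left, hd'β]
      linarith
    have hηp : e' - (m:ℝ) • d' ∈ AddSubmonoid.closure Δ := by
      rcases hposneg _ hη with hp | hp
      · exact hp
      · exfalso
        have h1 := hNN _ (hneg _ hη) hp
        rw [inner_neg_left] at h1
        linarith
    have hηd' : 0 < ⟪e' - (m:ℝ) • d', d'⟫ := by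
      rw [inner_sub_left, real_inner_smul_left]
      have : (m:ℝ) * ⟪d', d'⟫ = 2 * ⟪e', d'⟫ := by
        rw [← hm, div_mul_cancel₀ _ (ne_of_gt (hip d' hd'))]
      rw [this]; linarith
    have hηne : e' - (m:ℝ) • d' ≠ β := by
      intro h
      rw [h, real_inner_comm] at hηd'
      linarith
    have hνη : ν (e' - (m:ℝ) • d') = 1 := hPos3b _ hη hηp hηne hηβ
    rw [map_sub, map_smul, smul_eq_mul, hνe'] at hνη
    have hνd' : ν d' = 0 := by
      have : (m:ℝ) * ν d' = 0 := by linarith [hνη]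
      rcases mul_eq_zero.1 this with h | h
      · linarith
      · exact h
    rcases hd'd with h | h
    · rwa [h] at hνd'
    · rw [h, map_neg] at hνd'; linarith
  -- all roots orthogonal to β have ν = 0
  have hOA : ∀ d ∈ Φ, ⟪d, β⟫ = 0 → ν d = 0 := by
    intro d hd hdβ
    by_cases hex : ∃ e ∈ Φ, ⟪e, β⟫ ≠ 0 ∧ ⟪d, e⟫ ≠ 0
    · obtain ⟨e, he, heβ, hde⟩ := hex
      exact hOZ d hd hdβ e he heβ hde
    · exfalso
      push_neg at hex
      set S : Set V := {e | e ∈ Φ ∧ ⟪e, β⟫ ≠ 0} with hS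
      set W : Submodule ℝ V := Submodule.span ℝ S with hW
      -- any root not in W is orthogonal to all of S
      have horth : ∀ z ∈ Φ, z ∉ W → ∀ e ∈ Φ, ⟪e, β⟫ ≠ 0 → ⟪z, e⟫ = 0 := by
        intro z hz hzW
        by_contra hc
        push_neg at hc
        obtain ⟨e, he, heβ, hze⟩ := hc
        apply hzW
        by_cases hzβ : ⟪z, β⟫ = 0
        · obtain ⟨t, ht⟩ := hcrys e he z hz
          have htne : (t:ℝ) ≠ 0 := by
            rw [← ht]
            have : ⟪e, z⟫ ≠ 0 := by rw [real_inner_comm]; exact hze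
            have := hip z hz
            positivity
          have he' : e - (t:ℝ) • z ∈ Φ := by
            have := hrefl z hz e he; rwa [ht] at this
          have he'β : ⟪e - (t:ℝ) • z, β⟫ ≠ 0 := by
            rw [inner_sub_left, real_inner_smul_left, hzβ]
            simpa using heβ
          have hmem1 : e ∈ W := Submodule.subset_span ⟨he, heβ⟩
          have hmem2 : e - (t:ℝ) • z ∈ W := Submodule.subset_span ⟨he', he'β⟩
          have : (t:ℝ) • z ∈ W := by
            have := W.sub_mem hmem1 hmem2
            simpa using this
          have := W.smul_mem (t:ℝ)⁻¹ this
          rwa [smul_smul, inv_mul_cancel₀ htne, one_smul] at this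
        · exact Submodule.subset_span ⟨hz, hzβ⟩
      -- irreducibility: every root lies in W
      have hsplit := hirr {z | z ∈ Φ ∧ z ∈ W} {z | z ∈ Φ ∧ z ∉ W}
        (by
          ext z
          constructor
          · intro hz
            by_cases h : z ∈ W
            · exact Or.inl ⟨hz, h⟩
            · exact Or.inr ⟨hz, h⟩
          · rintro (⟨hz, _⟩ | ⟨hz, _⟩) <;> exact hz)
        (by
          rintro z1 ⟨hz1, hz1W⟩ z2 ⟨hz2, hz2W⟩
          have hz2o := horth z2 hz2 hz2W
          rw [real_inner_comm]
          have : ∀ x ∈ W, ⟪z2, x⟫ = 0 := by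
            intro x hx
            induction hx using Submodule.span_induction with
            | mem y hy => exact hz2o y hy.1 hy.2
            | zero => simp
            | add a b _ _ ha hb => rw [inner_add_right, ha, hb]; ring
            | smul r a _ ha => rw [real_inner_smul_right, ha]; ring
          exact this z1 hz1W)
      have hβW : β ∈ ({z | z ∈ Φ ∧ z ∈ W} : Set V) :=
        ⟨hβ, Submodule.subset_span ⟨hβ, ne_of_gt (hip β hβ)⟩⟩
      rcases hsplit with h | h
      · rw [h] at hβW; exact hβW
      · have hdW : d ∈ W := by
          by_contra hdW
          have : d ∈ ({z | z ∈ Φ ∧ z ∉ W} : Set V) := ⟨hd, hdW⟩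
          rw [h] at this; exact this
        -- d is orthogonal to all generators of W, hence to itself
        have : ∀ x ∈ W, ⟪d, x⟫ = 0 := by
          intro x hx
          induction hx using Submodule.span_induction with
          | mem y hy => exact hex y hy.1 hy.2
          | zero => simp
          | add a b _ _ ha hb => rw [inner_add_right, ha, hb]; ring
          | smul r a _ ha => rw [real_inner_smul_right, ha]; ring
        have := this d hdW
        exact hne d hd (inner_self_eq_zero.1 this)
  -- the key formula on roots
  have hβip := hip β hβ
  have key : ∀ a ∈ Φ, ν a = 2 * ⟪β, a⟫ / ⟪β, β⟫ := by
    have keypos : ∀ a ∈ Φ, a ∈ AddSubmonoid.closure Δ → ν a = 2 * ⟪β, a⟫ / ⟪β, β⟫ := by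
      intro a ha hap
      rcases lt_trichotomy (⟪a, β⟫) 0 with h | h | h
      · exact absurd (hNN a ha hap) (not_le.2 h)
      · rw [hOA a ha h, show ⟪β, a⟫ = (0:ℝ) by rw [real_inner_comm]; exact h]
        simp
      · by_cases hab : a = β
        · subst hab
          rw [hνβ]
          field_simp
        · rw [hPos3b a ha hap hab h, real_inner_comm]
          exact (hPos3a a ha hap hab h).symm
    intro a ha
    rcases hposneg a ha with hp | hp
    · exact keypos a ha hp
    · have h1 := keypos (-a) (hneg a ha) hp
      rw [map_neg, inner_neg_right] at h1
      have : -(ν a) = -(2 * ⟪β, a⟫ / ⟪β, β⟫) := by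
        rw [h1]; ring
      linarith
  refine ⟨hνβ, ?_⟩
  intro x
  have hx : x ∈ Submodule.span ℝ Φ := by rw [hspan]; trivial
  induction hx using Submodule.span_induction with
  | mem y hy => exact key y hy
  | zero => simp
  | add a b _ _ ha hb => rw [map_add, inner_add_right, ha, hb]; ring
  | smul r a _ ha => rw [map_smul, real_inner_smul_right, ha]; rw [smul_eq_mul]; ring
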